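/- Let K be a field of characteristic 0 with primitive q-th root of unity ω. For a formal power series F = Σ_{n≥1} f(n)xⁿ with multiplicative coefficient sequence f and a prime q, the series G(x) := Σ_{j=0}^{q−1} F(ω^j x) − q f(q) F(x^q) is supported on exponents divisible by q²; that is, its n-th coefficient vanishes unless q² ∣ n. -/

import Mathlib

open scoped Classical

/-- Substitution `x ↦ x^m` in a formal power series (for `m ≥ 1`). -/
noncomputable def substPow {K : Type*} [Semiring K] (m : ℕ) (F : PowerSeries K) :
    PowerSeries K :=
  PowerSeries.mk fun n => if m ≠ 0 ∧ m ∣ n then PowerSeries.coeff (R := K) (n / m) F else 0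

/-- For multiplicative `f`, a prime `q` and a primitive `q`-th root of
unity `ω`, the series `G(x) = Σ_{j=0}^{q-1} F(ω^j x) − q f(q) F(x^q)` is supported on
exponents divisible by `q²`. -/
theorem coeff_G_eq_zero_of_not_sq_dvd
    (K : Type*) [Field K] [CharZero K] (q : ℕ) (hq : q.Prime) (ω : K)
    (hω : IsPrimitiveRoot ω q) (f : ℕ → K)
    (hmult : ∀ m n : ℕ, m ≠ 0 → n ≠ 0 → Nat.Coprime m n → f (m * n) = f m * f n) :
    ∀ N : ℕ, ¬ (q ^ 2 ∣ N) →
      PowerSeries.coeff (R := K) N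
        ((∑ j ∈ Finset.range q,
            PowerSeries.rescale (ω ^ j) (PowerSeries.mk fun n => if n = 0 then 0 else f n)) -
          ((q : K) * f q) • substPow q (PowerSeries.mk fun n => if n = 0 then 0 else f n)) = 0 := by
  intro N hN
  have hN0 : N ≠ 0 := by rintro rfl; exact hN (dvd_zero _)
  rw [map_sub, map_sum, map_smul]
  simp only [PowerSeries.coeff_rescale, PowerSeries.coeff_mk, substPow, smul_eq_mul]
  have hsum : ∀ j, (ω ^ j) ^ N = (ω ^ N) ^ j := fun j => by
    rw [← pow_mul, ← pow_mul, Nat.mul_comm]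
  simp only [hsum]
  rw [← Finset.sum_mul]
  by_cases hdvd : q ∣ N
  · have hωN : ω ^ N = 1 := (hω.pow_eq_one_iff_dvd N).2 hdvd
    rw [hωN]
    simp only [one_pow, Finset.sum_const, Finset.card_range, nsmul_eq_mul, mul_one]
    rw [if_neg hN0, if_pos ⟨hq.ne_zero, hdvd⟩]
    obtain ⟨m, rfl⟩ := hdvd
    have hm0 : m ≠ 0 := by rintro rfl; exact hN0 (mul_zero q)
    have hqm : ¬ q ∣ m := fun h => hN (by obtain ⟨k, rfl⟩ := h; exact ⟨k, by ring⟩)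
    rw [Nat.mul_div_cancel_left m hq.pos, if_neg hm0,
      hmult q m hq.ne_zero hm0 (hq.coprime_iff_not_dvd.2 hqm)]
    ring
  · have hωN : ω ^ N ≠ 1 := fun h => hdvd ((hω.pow_eq_one_iff_dvd N).1 h)
    rw [geom_sum_eq hωN]
    have : (ω ^ N) ^ q = 1 := by rw [← pow_mul, mul_comm, pow_mul, hω.pow_eq_one, one_pow]
    rw [this]
    simp [hdvd]
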